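/- Fix reals a < b and let I^R(θ) = Φ(b−θ) − Φ(a−θ) + (a−θ)·φ(a−θ) − (b−θ)·φ(b−θ) + φ(a−θ)²/Φ(a−θ) + φ(b−θ)²/(1 − Φ(b−θ)) denote the Fisher information of the rectified Gaussian N^R(θ, 1, [a,b]) in its location parameter θ. Then I^R(θ) → 0 as θ → +∞. (In contrast, the Fisher information of the Gaussian N(θ,1) is the constant 1; thus the FIL of the rectified Gaussian mechanism is asymptotically 0 at the tail.) -/

import Mathlib

open MeasureTheory Real Filter

/-- Standard Gaussian density. -/
noncomputable def phi (x : ℝ) : ℝ := (Real.sqrt (2 * Real.pi))⁻¹ * Real.exp (-(x ^ 2) / 2)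

/-- Standard Gaussian cumulative distribution function. -/
noncomputable def Phi (x : ℝ) : ℝ := ∫ t in Set.Iic x, phi t

lemma sqrt_two_pi_pos : (0:ℝ) < Real.sqrt (2 * Real.pi) :=
  Real.sqrt_pos.2 (by positivity)

lemma phi_pos (x : ℝ) : 0 < phi x :=
  mul_pos (inv_pos.2 sqrt_two_pi_pos) (Real.exp_pos _)

lemma integrable_phi : Integrable phi := by
  have h : Integrable (fun x : ℝ => Real.exp (-(1/2 : ℝ) * x ^ 2)) :=
    integrable_exp_neg_mul_sq (by norm_num)
  have he : phi = fun x => (Real.sqrt (2 * Real.pi))⁻¹ * Real.exp (-(1/2 : ℝ) * x ^ 2) := by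
    funext x; unfold phi; congr 1; ring
  rw [he]
  exact h.const_mul _

lemma Phi_nonneg (x : ℝ) : 0 ≤ Phi x :=
  setIntegral_nonneg measurableSet_Iic (fun t _ => (phi_pos t).le)

/-- Lower bound on the Gaussian CDF for nonpositive arguments. -/
lemma phi_le_Phi (x : ℝ) (hx : x ≤ 0) : phi (x - 1) ≤ Phi x := by
  have h1 : ∫ _t in Set.Ioc (x-1) x, phi (x-1) ≤ ∫ t in Set.Ioc (x-1) x, phi t := by
    apply setIntegral_mono_on
      (integrableOn_const (by simp [Real.volume_Ioc]))
      integrable_phi.integrableOn measurableSet_Ioc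
    intro t ht
    unfold phi
    apply mul_le_mul_of_nonneg_left _ (inv_pos.2 sqrt_two_pi_pos).le
    apply Real.exp_le_exp.2
    have h1 : x - 1 ≤ t := ht.1.le
    have h2 : t ≤ x := ht.2
    nlinarith [mul_nonneg (sub_nonneg.2 h1) (by linarith : (0:ℝ) ≤ -(t + (x - 1)))]
  have h2 : ∫ _t in Set.Ioc (x-1) x, phi (x-1) = phi (x-1) := by
    rw [setIntegral_const, Real.volume_real_Ioc]
    rw [show x - (x-1) = 1 by ring]
    simp
  have h3 : ∫ t in Set.Ioc (x-1) x, phi t ≤ Phi x := by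
    apply setIntegral_mono_set integrable_phi.integrableOn
      (Filter.Eventually.of_forall (fun t => (phi_pos t).le))
      (HasSubset.Subset.eventuallyLE Set.Ioc_subset_Iic_self)
  linarith

/-- Upper bound on the Gaussian CDF for `x ≤ -2`. -/
lemma Phi_le (x : ℝ) (hx : x ≤ -2) : Phi x ≤ (Real.sqrt (2 * Real.pi))⁻¹ * Real.exp x := by
  have h1 : Phi x ≤ ∫ t in Set.Iic x, (Real.sqrt (2 * Real.pi))⁻¹ * Real.exp t := by
    apply setIntegral_mono_on integrable_phi.integrableOn
      ((integrableOn_exp_Iic x).const_mul _) measurableSet_Iic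
    intro t ht
    unfold phi
    apply mul_le_mul_of_nonneg_left _ (inv_pos.2 sqrt_two_pi_pos).le
    apply Real.exp_le_exp.2
    have h2 : t ≤ x := ht
    nlinarith
  rwa [MeasureTheory.integral_const_mul, integral_exp_Iic] at h1

lemma Phi_tendsto_atBot : Tendsto Phi atBot (nhds 0) := by
  apply tendsto_of_tendsto_of_tendsto_of_le_of_le'
    (g := fun _ : ℝ => (0:ℝ)) (h := fun x => (Real.sqrt (2 * Real.pi))⁻¹ * Real.exp x)
    tendsto_const_nhds
  · simpa using Real.tendsto_exp_atBot.const_mul (Real.sqrt (2 * Real.pi))⁻¹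
  · exact Filter.Eventually.of_forall (fun x => Phi_nonneg x)
  · filter_upwards [Filter.eventually_le_atBot (-2 : ℝ)] with x hx using Phi_le x hx

lemma phi_tendsto_atBot : Tendsto phi atBot (nhds 0) := by
  have hg : Tendsto (fun x : ℝ => -(x ^ 2) / 2) atBot atBot := by
    apply tendsto_atBot_mono' atBot (f₁ := id) ?_ tendsto_id
    filter_upwards [Filter.eventually_le_atBot (-2 : ℝ)] with x hx
    simp only [id]
    nlinarith
  have h := (Real.tendsto_exp_atBot.comp hg).const_mul (Real.sqrt (2 * Real.pi))⁻¹
  simp only [Function.comp, mul_zero] at h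
  unfold phi
  exact h

lemma mul_phi_tendsto_atBot : Tendsto (fun x : ℝ => x * phi x) atBot (nhds 0) := by
  have hxex : Tendsto (fun x : ℝ => x * Real.exp x) atBot (nhds 0) := by
    have h := (Real.tendsto_pow_mul_exp_neg_atTop_nhds_zero 1).comp tendsto_neg_atBot_atTop
    have h2 := h.neg
    simp only [Function.comp, pow_one, neg_neg, neg_mul, neg_zero] at h2
    exact h2
  apply tendsto_of_tendsto_of_tendsto_of_le_of_le'
    (g := fun x : ℝ => (Real.sqrt (2 * Real.pi))⁻¹ * (x * Real.exp x))
    (h := fun _ : ℝ => (0:ℝ))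
    (by simpa using hxex.const_mul (Real.sqrt (2 * Real.pi))⁻¹) tendsto_const_nhds
  · filter_upwards [Filter.eventually_le_atBot (-2 : ℝ)] with x hx
    unfold phi
    rw [show x * ((Real.sqrt (2 * Real.pi))⁻¹ * Real.exp (-(x ^ 2) / 2))
        = (Real.sqrt (2 * Real.pi))⁻¹ * (x * Real.exp (-(x ^ 2) / 2)) by ring]
    apply mul_le_mul_of_nonneg_left _ (inv_pos.2 sqrt_two_pi_pos).le
    have hex : Real.exp (-(x ^ 2) / 2) ≤ Real.exp x := by
      apply Real.exp_le_exp.2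
      nlinarith
    exact mul_le_mul_of_nonpos_left hex (by linarith)
  · filter_upwards [Filter.eventually_le_atBot (0 : ℝ)] with x hx
    exact mul_nonpos_of_nonpos_of_nonneg hx (phi_pos x).le

lemma phi_sq_div_Phi_tendsto : Tendsto (fun x : ℝ => phi x ^ 2 / Phi x) atBot (nhds 0) := by
  have key : ∀ x : ℝ, phi x ^ 2 / phi (x - 1)
      = (Real.sqrt (2 * Real.pi))⁻¹ * Real.exp ((-(x ^ 2) - 2 * x + 1) / 2) := by
    intro x
    unfold phi
    rw [show ((-(x ^ 2) - 2 * x + 1) / 2)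
        = (-(x ^ 2) / 2) + (-(x ^ 2) / 2) - (-((x - 1) ^ 2) / 2) by ring,
      Real.exp_sub, Real.exp_add]
    have h1 := Real.exp_ne_zero (-(x ^ 2) / 2)
    have h2 := Real.exp_ne_zero (-((x - 1) ^ 2) / 2)
    have h3 := sqrt_two_pi_pos.ne'
    field_simp
  have hg : Tendsto (fun x : ℝ => (-(x ^ 2) - 2 * x + 1) / 2) atBot atBot := by
    apply tendsto_atBot_mono' atBot (f₁ := fun x => x + 1) ?_
      (tendsto_atBot_add_const_right atBot (1:ℝ) tendsto_id)
    filter_upwards [Filter.eventually_le_atBot (-4 : ℝ)] with x hx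
    nlinarith
  have hbound : Tendsto (fun x : ℝ => phi x ^ 2 / phi (x - 1)) atBot (nhds 0) := by
    simp only [key]
    simpa using (Real.tendsto_exp_atBot.comp hg).const_mul (Real.sqrt (2 * Real.pi))⁻¹
  apply tendsto_of_tendsto_of_tendsto_of_le_of_le'
    (g := fun _ : ℝ => (0:ℝ)) (h := fun x => phi x ^ 2 / phi (x - 1))
    tendsto_const_nhds hbound
  · exact Filter.Eventually.of_forall
      (fun x => div_nonneg (sq_nonneg _) (Phi_nonneg x))
  · filter_upwards [Filter.eventually_le_atBot (0 : ℝ)] with x hx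
    exact div_le_div_of_nonneg_left (sq_nonneg _) (phi_pos _) (phi_le_Phi x hx)

/-- The Fisher information of the rectified Gaussian `N^R(θ, 1, [a,b])` in its
location parameter tends to `0` as `θ → +∞`. -/
theorem rectified_gaussian_fisher_info_tendsto_zero (a b : ℝ) (hab : a < b) :
    Tendsto (fun θ : ℝ =>
        Phi (b - θ) - Phi (a - θ) + (a - θ) * phi (a - θ) - (b - θ) * phi (b - θ) +
          phi (a - θ) ^ 2 / Phi (a - θ) + phi (b - θ) ^ 2 / (1 - Phi (b - θ)))
      atTop (nhds 0) := by
  have ha : Tendsto (fun θ : ℝ => a - θ) atTop atBot := by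
    simpa [sub_eq_add_neg] using tendsto_atBot_add_const_left atTop a tendsto_neg_atTop_atBot
  have hb : Tendsto (fun θ : ℝ => b - θ) atTop atBot := by
    simpa [sub_eq_add_neg] using tendsto_atBot_add_const_left atTop b tendsto_neg_atTop_atBot
  have T1 : Tendsto (fun θ : ℝ => Phi (b - θ)) atTop (nhds 0) := Phi_tendsto_atBot.comp hb
  have T2 : Tendsto (fun θ : ℝ => Phi (a - θ)) atTop (nhds 0) := Phi_tendsto_atBot.comp ha
  have T3 : Tendsto (fun θ : ℝ => (a - θ) * phi (a - θ)) atTop (nhds 0) :=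
    mul_phi_tendsto_atBot.comp ha
  have T4 : Tendsto (fun θ : ℝ => (b - θ) * phi (b - θ)) atTop (nhds 0) :=
    mul_phi_tendsto_atBot.comp hb
  have T5 : Tendsto (fun θ : ℝ => phi (a - θ) ^ 2 / Phi (a - θ)) atTop (nhds 0) :=
    phi_sq_div_Phi_tendsto.comp ha
  have T6 : Tendsto (fun θ : ℝ => phi (b - θ) ^ 2 / (1 - Phi (b - θ))) atTop (nhds 0) := by
    have hnum : Tendsto (fun θ : ℝ => phi (b - θ) ^ 2) atTop (nhds 0) := by
      have := (phi_tendsto_atBot.comp hb).pow 2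
      simpa using this
    have hden : Tendsto (fun θ : ℝ => 1 - Phi (b - θ)) atTop (nhds 1) := by
      have := T1.const_sub 1
      simpa using this
    simpa [Pi.div_def] using hnum.div hden one_ne_zero
  have := ((((T1.sub T2).add T3).sub T4).add T5).add T6
  simpa using this
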